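/- arXiv:0908.4482 — 4 statements merged into one kernel-verified Lean document; each statement's English description precedes it below -/
import Mathlib

section
/- $\tilde A$ is dense in $A^*$ if and only if for every finite-dimensional $A$-comodule $(V,\rho)$, the image of the algebra homomorphism $\pi_V : A^* \to \mathrm{End}_K(V)$ coincides with $\pi_V(\tilde A)$. -/
open TensorProduct

noncomputable section

variable {K : Type} [Field K] {A : Type} [CommRing A] [HopfAlgebra K A]

/-- Convolution product on the dual of a coalgebra:
`(w * w') a = ∑ w a₍₁₎ * w' a₍₂₎`. -/
def conv (w w' : Module.Dual K A) : Module.Dual K A :=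
  (LinearMap.mul' K K).comp ((TensorProduct.map w w').comp (Coalgebra.comul (R := K)))

/-- Left convolution by `u`, as a linear endomorphism of the dual. -/
def convL (u : Module.Dual K A) : Module.Dual K A →ₗ[K] Module.Dual K A where
  toFun := conv u
  map_add' x y := by
    unfold conv
    rw [TensorProduct.map_add_right, LinearMap.add_comp, LinearMap.comp_add]
  map_smul' c x := by
    show (LinearMap.mul' K K).comp ((TensorProduct.map u (c • x)).comp (Coalgebra.comul (R := K))) =
      c • (LinearMap.mul' K K).comp ((TensorProduct.map u x).comp (Coalgebra.comul (R := K)))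
    rw [TensorProduct.map_smul_right, LinearMap.smul_comp, LinearMap.comp_smul]

/-- The span of `{u * w' : w' ∈ A*}`. -/
def rightOrbit (u : Module.Dual K A) : Submodule K (Module.Dual K A) :=
  Submodule.span K {x | ∃ w', x = conv u w'}

lemma rightOrbit_mapsTo (u : Module.Dual K A) :
    ∀ x ∈ rightOrbit u, convL u x ∈ rightOrbit u := by
  intro x hx
  have h : Submodule.map (convL u) (rightOrbit u) ≤ rightOrbit u := by
    rw [rightOrbit, Submodule.map_span]
    apply Submodule.span_mono
    rintro y ⟨x, ⟨w', rfl⟩, rfl⟩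
    exact ⟨conv u w', rfl⟩
  exact h ⟨x, hx, rfl⟩

/-- The trace of the finite-rank operator "left convolution by `u`", computed as the trace of
its restriction to the finite-dimensional invariant subspace `u * A*` containing its image. -/
def convTrace (u : Module.Dual K A) : K :=
  LinearMap.trace K (rightOrbit u) ((convL u).restrict (rightOrbit_mapsTo u))

/-- The span of `{w₁ * w * w₂ : w₁, w₂ ∈ A*}`. -/
def twoSidedOrbit (w : Module.Dual K A) : Submodule K (Module.Dual K A) :=
  Submodule.span K {x | ∃ w₁ w₂, x = conv w₁ (conv w w₂)}

/-- `Ã = {w ∈ A* : dim_K (A* * w * A*) < ∞}`. -/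
def tildeSet (K : Type) [Field K] (A : Type) [CommRing A] [HopfAlgebra K A] :
    Set (Module.Dual K A) :=
  {w | FiniteDimensional K (twoSidedOrbit w)}

/-- A normalized invariant integral on `G = Spec A`:  `w_G(1) = 1` and
`w * w_G = w(1) w_G = w_G * w` for all `w ∈ A*`. -/
def IsNormalizedIntegral (wG : Module.Dual K A) : Prop :=
  wG 1 = 1 ∧ ∀ w : Module.Dual K A, conv w wG = w 1 • wG ∧ conv wG w = w 1 • wG
/-- `Ã` is dense in `A*` (for the weak linear topology): the only `a ∈ A` annihilated by all
of `Ã` is `0`. -/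
def TildeDense (K : Type) [Field K] (A : Type) [CommRing A] [HopfAlgebra K A] : Prop :=
  ∀ a : A, (∀ u ∈ tildeSet K A, u a = 0) → a = 0

/-- `(V, ρ)` is an `A`-comodule: coassociativity and counit axioms. -/
def IsComodule {V : Type} [AddCommGroup V] [Module K V] (ρ : V →ₗ[K] V ⊗[K] A) : Prop :=
  ((TensorProduct.assoc K V A A).toLinearMap.comp ((ρ.rTensor A).comp ρ) =
      (LinearMap.lTensor V (Coalgebra.comul (R := K))).comp ρ) ∧
  ((TensorProduct.rid K V).toLinearMap.comp
      ((LinearMap.lTensor V (Coalgebra.counit (R := K))).comp ρ) = LinearMap.id)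

/-- The action of `w ∈ A*` on an `A`-comodule `(V, ρ)`: `w ⋅ v = (id ⊗ w)(ρ v)`.
As a map `π_V : A* → End_K(V)` it is a unital algebra homomorphism. -/
def coact {V : Type} [AddCommGroup V] [Module K V] (ρ : V →ₗ[K] V ⊗[K] A)
    (w : Module.Dual K A) : V →ₗ[K] V :=
  (TensorProduct.rid K V).toLinearMap.comp ((LinearMap.lTensor V w).comp ρ)

lemma conv_apply_repr (w w' : Module.Dual K A) {a : A} {ι : Type*} (repr : Coalgebra.Repr K a ι) :
    conv w w' a = ∑ i ∈ repr.index, w (repr.left i) * w' (repr.right i) := by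
  have : conv w w' a = (LinearMap.mul' K K) ((TensorProduct.map w w') (Coalgebra.comul a)) := rfl
  rw [this, ← repr.eq, map_sum, map_sum]
  simp

lemma conv_assoc (w u w' : Module.Dual K A) : conv (conv w u) w' = conv w (conv u w') := by
  ext a
  classical
  set repr := Coalgebra.Repr.arbitrary K a with hrepr
  set a₁ : (i : A × A) → Coalgebra.Repr K (repr.left i) (A × A) := fun i => Coalgebra.Repr.arbitrary K _
  set a₂ : (i : A × A) → Coalgebra.Repr K (repr.right i) (A × A) := fun i => Coalgebra.Repr.arbitrary K _
  have key := Coalgebra.sum_tmul_tmul_eq repr a₁ a₂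
  have key2 := congrArg ((LinearMap.mul' K K) ∘ₗ
    TensorProduct.map w ((LinearMap.mul' K K) ∘ₗ TensorProduct.map u w')) key
  simp only [map_sum, LinearMap.coe_comp, Function.comp_apply, TensorProduct.map_tmul,
    LinearMap.mul'_apply] at key2
  rw [conv_apply_repr (conv w u) w' repr, conv_apply_repr w (conv u w') repr]
  calc ∑ i ∈ repr.index, conv w u (repr.left i) * w' (repr.right i)
      = ∑ i ∈ repr.index, ∑ j ∈ (a₁ i).index,
          w ((a₁ i).left j) * (u ((a₁ i).right j) * w' (repr.right i)) := by
        refine Finset.sum_congr rfl fun i _ => ?_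
        rw [conv_apply_repr w u (a₁ i), Finset.sum_mul]
        exact Finset.sum_congr rfl fun j _ => mul_assoc _ _ _
    _ = ∑ i ∈ repr.index, ∑ j ∈ (a₂ i).index,
          w (repr.left i) * (u ((a₂ i).left j) * w' ((a₂ i).right j)) := key2
    _ = ∑ i ∈ repr.index, w (repr.left i) * conv u w' (repr.right i) := by
        refine Finset.sum_congr rfl fun i _ => ?_
        rw [conv_apply_repr u w' (a₂ i), Finset.mul_sum]


lemma conv_add_left (w w' u : Module.Dual K A) :
    conv (w + w') u = conv w u + conv w' u := by
  unfold conv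
  rw [TensorProduct.map_add_left, LinearMap.add_comp, LinearMap.comp_add]

lemma conv_smul_left (c : K) (w u : Module.Dual K A) :
    conv (c • w) u = c • conv w u := by
  unfold conv
  rw [TensorProduct.map_smul_left, LinearMap.smul_comp, LinearMap.comp_smul]

lemma conv_zero_left (u : Module.Dual K A) : conv 0 u = 0 := by
  unfold conv
  rw [TensorProduct.map_zero_left, LinearMap.zero_comp, LinearMap.comp_zero]

lemma conv_zero_right (u : Module.Dual K A) : conv u 0 = 0 := by
  unfold conv
  rw [TensorProduct.map_zero_right, LinearMap.zero_comp, LinearMap.comp_zero]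

lemma conv_add_right (w u u' : Module.Dual K A) :
    conv w (u + u') = conv w u + conv w u' := by
  unfold conv
  rw [TensorProduct.map_add_right, LinearMap.add_comp, LinearMap.comp_add]

lemma conv_smul_right (c : K) (w u : Module.Dual K A) :
    conv w (c • u) = c • conv w u := by
  unfold conv
  rw [TensorProduct.map_smul_right, LinearMap.smul_comp, LinearMap.comp_smul]

lemma mem_tildeSet_of_le {w : Module.Dual K A} {S : Submodule K (Module.Dual K A)}
    [FiniteDimensional K S] (h : twoSidedOrbit w ≤ S) : w ∈ tildeSet K A :=
  Submodule.finiteDimensional_of_le h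

/-- `Ã` as a submodule. -/
def tildeSubmodule (K : Type) [Field K] (A : Type) [CommRing A] [HopfAlgebra K A] :
    Submodule K (Module.Dual K A) where
  carrier := tildeSet K A
  zero_mem' := by
    apply mem_tildeSet_of_le (S := ⊥)
    rw [twoSidedOrbit, Submodule.span_le]
    rintro x ⟨w₁, w₂, rfl⟩
    simp [conv_zero_left, conv_zero_right]
  add_mem' := by
    intro w w' hw hw'
    haveI : FiniteDimensional K (twoSidedOrbit w) := hw
    haveI : FiniteDimensional K (twoSidedOrbit w') := hw'
    apply mem_tildeSet_of_le (S := twoSidedOrbit w ⊔ twoSidedOrbit w')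
    rw [twoSidedOrbit, Submodule.span_le]
    rintro x ⟨w₁, w₂, rfl⟩
    rw [conv_add_left, conv_add_right]
    exact add_mem
      (Submodule.mem_sup_left (Submodule.subset_span ⟨w₁, w₂, rfl⟩))
      (Submodule.mem_sup_right (Submodule.subset_span ⟨w₁, w₂, rfl⟩))
  smul_mem' := by
    intro c w hw
    haveI : FiniteDimensional K (twoSidedOrbit w) := hw
    apply mem_tildeSet_of_le (S := twoSidedOrbit w)
    rw [twoSidedOrbit, Submodule.span_le]
    rintro x ⟨w₁, w₂, rfl⟩
    rw [conv_smul_left, conv_smul_right]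
    exact Submodule.smul_mem _ _ (Submodule.subset_span ⟨w₁, w₂, rfl⟩)

section Legs

variable {M N : Type} [AddCommGroup M] [Module K M] [AddCommGroup N] [Module K N]

/-- Extraction of "first legs" of a tensor `T : M ⊗ N` via functionals on `N`. -/
def legMap (T : M ⊗[K] N) : Module.Dual K N →ₗ[K] M where
  toFun f := (TensorProduct.rid K M) (LinearMap.lTensor M f T)
  map_add' f g := by
    rw [LinearMap.lTensor_add, LinearMap.add_apply, map_add]
  map_smul' c f := by
    rw [LinearMap.lTensor_smul, LinearMap.smul_apply, map_smul, RingHom.id_apply]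

lemma legMap_apply (T : M ⊗[K] N) (f : Module.Dual K N) :
    legMap T f = (TensorProduct.rid K M) (LinearMap.lTensor M f T) := rfl

lemma legMap_sum {ι : Type*} (s : Finset ι) (x : ι → M) (y : ι → N) (f : Module.Dual K N) :
    legMap (∑ i ∈ s, x i ⊗ₜ[K] y i) f = ∑ i ∈ s, f (y i) • x i := by
  rw [legMap_apply, map_sum, map_sum]
  simp [TensorProduct.rid_tmul]

/-- The span of the first legs of a tensor. -/
def legSpan (T : M ⊗[K] N) : Submodule K M := LinearMap.range (legMap T)

instance legSpan_fd (T : M ⊗[K] N) : FiniteDimensional K (legSpan T) := by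
  classical
  obtain ⟨S, hS⟩ := TensorProduct.exists_finset T
  have hle : legSpan T ≤ Submodule.span K (S.image Prod.fst : Set M) := by
    rintro x ⟨f, rfl⟩
    rw [hS]
    rw [show (∑ p ∈ S, p.1 ⊗ₜ[K] p.2) = ∑ p ∈ S, p.1 ⊗ₜ[K] p.2 from rfl]
    rw [legMap_sum]
    exact Submodule.sum_mem _ fun p hp => Submodule.smul_mem _ _
      (Submodule.subset_span (Finset.mem_coe.2 (Finset.mem_image_of_mem Prod.fst hp)))
  exact Submodule.finiteDimensional_of_le hle

/-- Every tensor lies in (first-leg span) ⊗ N. -/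
lemma mem_range_rTensor_legSpan (T : M ⊗[K] N) :
    T ∈ LinearMap.range (LinearMap.rTensor N (legSpan T).subtype) := by
  classical
  obtain ⟨S, hS⟩ := TensorProduct.exists_finset T
  set Y : Submodule K N := Submodule.span K (S.image Prod.snd : Set N) with hY
  haveI : FiniteDimensional K Y := by
    apply FiniteDimensional.span_finset
  have hmemY : ∀ p ∈ S, p.2 ∈ Y := fun p hp =>
    Submodule.subset_span (Finset.mem_coe.2 (Finset.mem_image_of_mem Prod.snd hp))
  set b := Module.finBasis K Y with hb
  -- extend the coordinate functionals to N
  have hext : ∀ j, ∃ F : Module.Dual K N, Y.dualRestrict F = b.coord j := fun j =>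
    Subspace.dualRestrict_surjective _
  choose F hF using hext
  have hFval : ∀ j (y : Y), F j (y : N) = b.repr y j := by
    intro j y
    have := congrArg (fun φ => φ y) (hF j)
    simpa [Submodule.dualRestrict_apply, Module.Basis.coord_apply] using this
  have hcoord : ∀ (y : Y), (y : N) = ∑ j, b.repr y j • (b j : N) := by
    intro y
    conv_lhs => rw [← b.sum_repr y]
    simp only [Submodule.coe_sum, Submodule.coe_smul]
  -- T = ∑_j legMap T (F j) ⊗ b j
  have hT : T = ∑ j, legMap T (F j) ⊗ₜ[K] (b j : N) := by
    calc T = ∑ p ∈ S.attach, (p : M × N).1 ⊗ₜ[K]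
              ∑ j, b.repr ⟨(p : M × N).2, hmemY _ p.2⟩ j • (b j : N) := by
          rw [hS, ← Finset.sum_attach S (fun p => p.1 ⊗ₜ[K] p.2)]
          exact Finset.sum_congr rfl fun p _ => by
            rw [← hcoord ⟨(p : M × N).2, hmemY _ p.2⟩]
      _ = ∑ j, (∑ p ∈ S.attach,
              b.repr ⟨(p : M × N).2, hmemY _ p.2⟩ j • (p : M × N).1) ⊗ₜ[K] (b j : N) := by
          simp_rw [TensorProduct.tmul_sum, TensorProduct.tmul_smul]
          rw [Finset.sum_comm]
          simp_rw [TensorProduct.sum_tmul, TensorProduct.smul_tmul']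
      _ = ∑ j, legMap T (F j) ⊗ₜ[K] (b j : N) := by
          refine Finset.sum_congr rfl fun j _ => ?_
          congr 1
          rw [hS, legMap_sum, ← Finset.sum_attach S (fun p => F j p.2 • p.1)]
          exact Finset.sum_congr rfl fun p _ => by
            rw [hFval j ⟨(p : M × N).2, hmemY _ p.2⟩]
  refine ⟨∑ j, (⟨legMap T (F j), ⟨F j, rfl⟩⟩ : legSpan T) ⊗ₜ[K] (b j : N), ?_⟩
  rw [map_sum]
  simp only [LinearMap.rTensor_tmul, Submodule.coe_subtype]
  exact hT.symm

end Legs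

lemma exists_decomp_legSpan {M N : Type} [AddCommGroup M] [Module K M] [AddCommGroup N]
    [Module K N] (T : M ⊗[K] N) :
    ∃ S : Finset (↥(legSpan T) × N), T = ∑ p ∈ S, (p.1 : M) ⊗ₜ[K] p.2 := by
  obtain ⟨T', hT'⟩ := mem_range_rTensor_legSpan T
  obtain ⟨S, hS⟩ := TensorProduct.exists_finset T'
  refine ⟨S, ?_⟩
  conv_lhs => rw [← hT']
  rw [hS, map_sum]
  simp


section Backward

/-- The coefficient space of `a`: the span of the first legs of `comul a`. -/
abbrev coefSpace (K : Type) [Field K] {A : Type} [CommRing A] [HopfAlgebra K A] (a : A) :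
    Submodule K A := legSpan (Coalgebra.comul (R := K) (A := A) a)

variable (a : A)

lemma self_mem_coefSpace : a ∈ coefSpace K a := by
  refine ⟨Coalgebra.counit (R := K), ?_⟩
  rw [legMap_apply, Coalgebra.lTensor_counit_comul, TensorProduct.rid_tmul, one_smul]

lemma comul_mem_range_rTensor (f : Module.Dual K A) :
    Coalgebra.comul (R := K) (legMap (Coalgebra.comul (R := K) a) f) ∈
      LinearMap.range ((coefSpace K a).subtype.rTensor A) := by
  classical
  obtain ⟨S, hS⟩ := exists_decomp_legSpan (Coalgebra.comul (R := K) a)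
  set myRepr : Coalgebra.Repr K a (↥(coefSpace K a) × A) :=
    ⟨S, fun p => (p.1 : A), fun p => p.2, hS.symm⟩ with hmy
  set a₁ : (i : ↥(coefSpace K a) × A) → Coalgebra.Repr K (myRepr.left i) (A × A) :=
    fun i => Coalgebra.Repr.arbitrary K _
  set a₂ : (i : ↥(coefSpace K a) × A) → Coalgebra.Repr K (myRepr.right i) (A × A) :=
    fun i => Coalgebra.Repr.arbitrary K _
  have key := Coalgebra.sum_tmul_tmul_eq myRepr a₁ a₂
  set Ψ : A ⊗[K] (A ⊗[K] A) →ₗ[K] A ⊗[K] A :=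
    LinearMap.lTensor A ((TensorProduct.rid K A).toLinearMap.comp (LinearMap.lTensor A f))
  have key2 := congrArg Ψ key
  simp only [map_sum, Ψ, LinearMap.lTensor_tmul, LinearMap.coe_comp, LinearEquiv.coe_coe,
    Function.comp_apply, TensorProduct.rid_tmul] at key2
  have hleft : Coalgebra.comul (R := K) (legMap (Coalgebra.comul (R := K) a) f) =
      ∑ i ∈ myRepr.index, ∑ j ∈ (a₁ i).index,
        (a₁ i).left j ⊗ₜ[K] (f (myRepr.right i) • (a₁ i).right j) := by
    have h1 : legMap (Coalgebra.comul (R := K) a) f =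
        ∑ i ∈ myRepr.index, f (myRepr.right i) • myRepr.left i := by
      conv_lhs => rw [← myRepr.eq]
      rw [legMap_sum]
    rw [h1, map_sum]
    refine Finset.sum_congr rfl fun i _ => ?_
    rw [map_smul, ← (a₁ i).eq, Finset.smul_sum]
    exact Finset.sum_congr rfl fun j _ => by rw [TensorProduct.tmul_smul]
  rw [hleft, key2]
  refine Submodule.sum_mem _ fun i _ => Submodule.sum_mem _ fun j _ => ?_
  exact ⟨i.1 ⊗ₜ[K] (f ((a₂ i).right j) • (a₂ i).left j), by simp; rfl⟩

end Backward
section Backward2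

variable (a : A)

lemma comul_mem_range_rTensor' (v : ↥(coefSpace K a)) :
    Coalgebra.comul (R := K) (v : A) ∈
      LinearMap.range ((coefSpace K a).subtype.rTensor A) := by
  obtain ⟨f, hf⟩ := v.2
  exact hf ▸ comul_mem_range_rTensor a f

lemma rTensor_subtype_injective (N : Type) [AddCommGroup N] [Module K N]
    (C : Submodule K A) :
    Function.Injective (C.subtype.rTensor N) :=
  Module.Flat.rTensor_preserves_injective_linearMap _ C.injective_subtype

/-- The comodule structure on the coefficient space. -/
def coefRho : ↥(coefSpace K a) →ₗ[K] ↥(coefSpace K a) ⊗[K] A :=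
  (LinearEquiv.ofInjective ((coefSpace K a).subtype.rTensor A)
      (rTensor_subtype_injective A (coefSpace K a))).symm.toLinearMap.comp
    (LinearMap.codRestrict _
      ((Coalgebra.comul (R := K)).comp (coefSpace K a).subtype)
      (fun v => comul_mem_range_rTensor' a v))

lemma coefRho_spec (v : ↥(coefSpace K a)) :
    (coefSpace K a).subtype.rTensor A (coefRho a v) = Coalgebra.comul (R := K) (v : A) := by
  set j := (coefSpace K a).subtype.rTensor A
  set hj := rTensor_subtype_injective (K := K) A (coefSpace K a)
  have h : ∀ y : LinearMap.range j, j ((LinearEquiv.ofInjective j hj).symm y) = ↑y := by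
    intro y
    have := (LinearEquiv.ofInjective j hj).apply_symm_apply y
    rw [← this, LinearEquiv.ofInjective_apply, (LinearEquiv.ofInjective j hj).apply_symm_apply]
  exact h _

end Backward2
section Backward3

variable (a : A)

set_option maxHeartbeats 800000 in
set_option synthInstance.maxHeartbeats 200000 in
lemma coefRho_isComodule : IsComodule (K := K) (A := A) (coefRho (K := K) a) := by
  classical
  set C := coefSpace K a with hC
  set ρ := coefRho (K := K) a with hρdef
  have hdec : ∀ c : ↥C, ∃ Sc : Finset (↥C × A), ρ c = ∑ q ∈ Sc, q.1 ⊗ₜ[K] q.2 :=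
    fun c => TensorProduct.exists_finset _
  choose Sf hSf using hdec
  have hcomul : ∀ c : ↥C,
      Coalgebra.comul (R := K) (c : A) = ∑ q ∈ Sf c, (q.1 : A) ⊗ₜ[K] q.2 := by
    intro c
    rw [← coefRho_spec a c, hSf c, map_sum]
    simp
  constructor
  · apply LinearMap.ext; intro v
    apply rTensor_subtype_injective (K := K) (A ⊗[K] A) C
    have e1 : ∑ p ∈ Sf v, ρ p.1 ⊗ₜ[K] p.2
        = ∑ p ∈ Sf v, ∑ q ∈ Sf p.1, ((q.1 : ↥C) ⊗ₜ[K] q.2) ⊗ₜ[K] p.2 :=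
      Finset.sum_congr rfl fun p _ => by rw [hSf p.1, TensorProduct.sum_tmul]
    have hL : (C.subtype.rTensor (A ⊗[K] A))
        ((TensorProduct.assoc K ↥C A A) ((ρ.rTensor A) (ρ v)))
        = ∑ p ∈ Sf v, ∑ q ∈ Sf p.1, (q.1 : A) ⊗ₜ[K] (q.2 ⊗ₜ[K] p.2) := by
      rw [hSf v, map_sum]
      simp only [LinearMap.rTensor_tmul]
      rw [e1]
      simp [map_sum, TensorProduct.assoc_tmul]
    have hR : (C.subtype.rTensor (A ⊗[K] A))
        ((LinearMap.lTensor ↥C (Coalgebra.comul (R := K))) (ρ v))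
        = ∑ p ∈ Sf v, (p.1 : A) ⊗ₜ[K] Coalgebra.comul (R := K) p.2 := by
      rw [hSf v, map_sum, map_sum]
      simp
    have hA := Coalgebra.coassoc_apply (R := K) (v : A)
    have hA1 : (Coalgebra.comul (R := K)).rTensor A (Coalgebra.comul (R := K) (v : A))
        = ∑ p ∈ Sf v, ∑ q ∈ Sf p.1, ((q.1 : A) ⊗ₜ[K] q.2) ⊗ₜ[K] p.2 := by
      rw [hcomul v, map_sum]
      simp only [LinearMap.rTensor_tmul]
      exact Finset.sum_congr rfl fun p _ => by rw [hcomul p.1, TensorProduct.sum_tmul]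
    have hA2 : (Coalgebra.comul (R := K)).lTensor A (Coalgebra.comul (R := K) (v : A))
        = ∑ p ∈ Sf v, (p.1 : A) ⊗ₜ[K] Coalgebra.comul (R := K) p.2 := by
      rw [hcomul v, map_sum]
      simp
    simp only [LinearMap.coe_comp, Function.comp_apply, LinearEquiv.coe_coe]
    rw [hL, hR, ← hA2, ← hA, hA1]
    simp [map_sum, TensorProduct.assoc_tmul]
  · apply LinearMap.ext; intro v
    apply Subtype.ext
    have hA := Coalgebra.lTensor_counit_comul (R := K) (v : A)
    rw [hcomul v, map_sum] at hA
    simp only [LinearMap.lTensor_tmul] at hA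
    have hA' := congrArg (TensorProduct.rid K A) hA
    rw [map_sum] at hA'
    simp only [TensorProduct.rid_tmul, one_smul] at hA'
    simp only [LinearMap.coe_comp, Function.comp_apply, LinearEquiv.coe_coe, LinearMap.id_coe,
      id_eq]
    rw [hSf v, map_sum, map_sum]
    simp only [LinearMap.lTensor_tmul, TensorProduct.rid_tmul]
    rw [← hA']
    simp

end Backward3
section Forward

variable {V : Type} [AddCommGroup V] [Module K V] [FiniteDimensional K V]
  (ρ : V →ₗ[K] V ⊗[K] A)

/-- The matrix coefficients of the comodule `(V, ρ)` in a fixed basis. -/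
def coefFun (i : Fin (Module.finrank K V)) : V →ₗ[K] A :=
  (TensorProduct.lid K A).toLinearMap ∘ₗ
    (LinearMap.rTensor A ((Module.finBasis K V).coord i)) ∘ₗ ρ

lemma expand_basis (x : V ⊗[K] A) :
    x = ∑ i, (Module.finBasis K V) i ⊗ₜ[K]
      (TensorProduct.lid K A) (LinearMap.rTensor A ((Module.finBasis K V).coord i) x) := by
  set b := Module.finBasis K V
  induction x with
  | zero => simp
  | tmul v y =>
      simp only [LinearMap.rTensor_tmul, Module.Basis.coord_apply, TensorProduct.lid_tmul]
      calc v ⊗ₜ[K] y = (∑ i, b.repr v i • b i) ⊗ₜ[K] y := by rw [b.sum_repr v]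
        _ = ∑ i, b i ⊗ₜ[K] (b.repr v i • y) := by
            rw [TensorProduct.sum_tmul]
            exact Finset.sum_congr rfl fun i _ => by
              rw [TensorProduct.smul_tmul, TensorProduct.tmul_smul]
  | add x y hx hy =>
      conv_lhs => rw [hx, hy]
      rw [← Finset.sum_add_distrib]
      simp [TensorProduct.tmul_add]

lemma coact_eq_sum (u : Module.Dual K A) (v : V) :
    coact (K := K) ρ u v = ∑ i, u (coefFun ρ i v) • (Module.finBasis K V) i := by
  have h := expand_basis (K := K) (ρ v)
  calc coact (K := K) ρ u v
      = (TensorProduct.rid K V) ((LinearMap.lTensor V u) (ρ v)) := rfl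
    _ = ∑ i, u (coefFun ρ i v) • (Module.finBasis K V) i := by
        conv_lhs => rw [h]
        rw [map_sum, map_sum]
        simp only [LinearMap.lTensor_tmul, TensorProduct.rid_tmul]
        rfl

/-- The coefficient space of a finite-dimensional comodule. -/
def coefSpaceV : Submodule K A := ⨆ i, LinearMap.range (coefFun ρ i)

instance : FiniteDimensional K (coefSpaceV ρ) := by
  haveI : ∀ i, FiniteDimensional K (LinearMap.range (coefFun ρ i)) :=
    fun i => Module.Finite.range _
  show FiniteDimensional K (⨆ i, LinearMap.range (coefFun ρ i) : Submodule K A)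
  infer_instance

lemma coact_congr_of_eqOn {u w : Module.Dual K A}
    (h : ∀ x ∈ coefSpaceV ρ, u x = w x) : coact (K := K) ρ u = coact (K := K) ρ w := by
  ext v
  rw [coact_eq_sum, coact_eq_sum]
  refine Finset.sum_congr rfl fun i _ => ?_
  rw [h _ (le_iSup (fun i => LinearMap.range (coefFun ρ i)) i ⟨v, rfl⟩)]

set_option maxHeartbeats 800000 in
set_option synthInstance.maxHeartbeats 400000 in
lemma forward_direction (hd : TildeDense K A) :
    Set.range (coact (K := K) ρ) = coact (K := K) ρ '' tildeSet K A := by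
  refine Set.Subset.antisymm ?_ (Set.image_subset_range _ _)
  rintro _ ⟨w, rfl⟩
  set C := coefSpaceV ρ
  set W : Submodule K (Module.Dual K ↥C) :=
    Submodule.map C.dualRestrict (tildeSubmodule K A) with hWdef
  have hW : W.dualCoannihilator = ⊥ := by
    rw [eq_bot_iff]
    intro c hc
    rw [Submodule.mem_dualCoannihilator] at hc
    rw [Submodule.mem_bot]
    apply Subtype.ext
    refine hd (c : A) fun u hu => ?_
    have := hc (C.dualRestrict u) ⟨u, hu, rfl⟩
    simpa using this
  haveI : FiniteDimensional K (Module.Dual K ↥C) := inferInstance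
  haveI : FiniteDimensional K W := inferInstance
  have hWtop : W = ⊤ := by
    rw [← Subspace.dualCoannihilator_dualAnnihilator_eq (W := W), hW,
      Submodule.dualAnnihilator_bot]
  have hmem : C.dualRestrict w ∈ W := hWtop ▸ Submodule.mem_top
  obtain ⟨u, hu, hres⟩ := hmem
  refine ⟨u, hu, ?_⟩
  apply coact_congr_of_eqOn
  intro x hx
  have := congrArg (fun φ => φ ⟨x, hx⟩) hres
  simpa using this

end Forward
lemma conv_mem_tildeSet (w : Module.Dual K A) {u : Module.Dual K A}
    (hu : u ∈ tildeSet K A) : conv w u ∈ tildeSet K A := by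
  haveI : FiniteDimensional K (twoSidedOrbit u) := hu
  apply mem_tildeSet_of_le (S := twoSidedOrbit u)
  rw [twoSidedOrbit, Submodule.span_le]
  rintro x ⟨w₁, w₂, rfl⟩
  rw [conv_assoc w u w₂, ← conv_assoc w₁ w (conv u w₂)]
  exact Submodule.subset_span ⟨conv w₁ w, w₂, rfl⟩

set_option maxHeartbeats 800000 in
lemma backward_direction
    (h : ∀ (V : Type) [AddCommGroup V] [Module K V] [FiniteDimensional K V]
      (ρ : V →ₗ[K] V ⊗[K] A), IsComodule (K := K) ρ →
        Set.range (coact (K := K) ρ) = coact (K := K) ρ '' tildeSet K A) :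
    TildeDense K A := by
  classical
  intro a ha
  set C := coefSpace K a with hC
  set ρ := coefRho (K := K) a with hρdef
  have hco := coefRho_isComodule (K := K) a
  have himg := h ↥C ρ hco
  have hid : coact (K := K) ρ (Coalgebra.counit (R := K)) = LinearMap.id := hco.2
  have hmem : coact (K := K) ρ (Coalgebra.counit (R := K)) ∈
      coact (K := K) ρ '' tildeSet K A := by
    rw [← himg]; exact ⟨_, rfl⟩
  obtain ⟨u, hu, hcu⟩ := hmem
  set va : ↥C := ⟨a, self_mem_coefSpace (K := K) a⟩ with hva
  have h1 : coact (K := K) ρ u va = va := by rw [hcu, hid]; rfl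
  obtain ⟨S, hS⟩ := TensorProduct.exists_finset (ρ va)
  have hcomul : Coalgebra.comul (R := K) a = ∑ p ∈ S, (p.1 : A) ⊗ₜ[K] p.2 := by
    have := coefRho_spec (K := K) a va
    rw [hS, map_sum] at this
    simpa using this.symm
  have h2 : a = ∑ p ∈ S, u p.2 • (p.1 : A) := by
    have := congrArg (fun c : ↥C => (c : A)) h1
    rw [show coact (K := K) ρ u va
        = (TensorProduct.rid K ↥C) ((LinearMap.lTensor ↥C u) (ρ va)) from rfl, hS] at this
    rw [map_sum, map_sum] at this
    simp only [LinearMap.lTensor_tmul, TensorProduct.rid_tmul] at this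
    refine this.symm.trans ?_
    simp
  have hzero : ∀ w : Module.Dual K A, w a = 0 := by
    intro w
    set myRepr : Coalgebra.Repr K a (↥C × A) := ⟨S, fun p => (p.1 : A), fun p => p.2, hcomul.symm⟩
    have hwa : w a = conv w u a := by
      rw [conv_apply_repr w u myRepr]
      conv_lhs => rw [h2]
      rw [map_sum]
      simp only [map_smul, smul_eq_mul]
      exact Finset.sum_congr rfl fun p _ => mul_comm _ _
    rw [hwa]
    exact ha _ (conv_mem_tildeSet w hu)
  exact (Module.forall_dual_apply_eq_zero_iff K a).mp hzero

/-- `Ã` is dense in `A*` if and only if for every finite-dimensional `A`-comodule `(V, ρ)` the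
image of the algebra homomorphism `π_V : A* → End_K(V)` coincides with the image of `Ã`. -/
theorem tilde_dense_iff_images_agree :
    TildeDense K A ↔
      ∀ (V : Type) [AddCommGroup V] [Module K V] [FiniteDimensional K V]
        (ρ : V →ₗ[K] V ⊗[K] A), IsComodule ρ →
          Set.range (coact ρ) = coact ρ '' tildeSet K A := by
  constructor
  · intro hd V _ _ _ ρ _
    exact forward_direction ρ hd
  · exact backward_direction
end
end

section
/- Let $A = \mathbb{C}[x]$ be the polynomial Hopf algebra over $\mathbb{C}$, with $\Delta(x) = x \otimes 1 + 1 \otimes x$, $\varepsilon(x) = 0$ and $S(x) = -x$. Then $\tilde A = 0$: the only $w \in A^*$ with $\dim_{\mathbb{C}} (A^* * w * A^*) < \infty$ is $w = 0$. -/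
open TensorProduct

/-- Let `A = ℂ[x]` be the polynomial Hopf algebra over `ℂ`, i.e. a commutative Hopf
`ℂ`-algebra with basis `(xⁿ)_{n ∈ ℕ}` satisfying `xᵐ xⁿ = xᵐ⁺ⁿ`, `x⁰ = 1`,
`Δ(x) = x ⊗ 1 + 1 ⊗ x`, `ε(x) = 0` and `S(x) = -x`. Then `Ã = 0`: the only `w ∈ A*` with
`dim_ℂ (A* * w * A*) < ∞` is `w = 0`. -/
theorem polynomial_tilde_eq_zero (A : Type) [CommRing A] [HopfAlgebra ℂ A]
    (b : Module.Basis ℕ ℂ A)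
    (hone : b 0 = 1)
    (hmul : ∀ m n : ℕ, b m * b n = b (m + n))
    (hcomul : Coalgebra.comul (R := ℂ) (b 1) = b 1 ⊗ₜ[ℂ] (1 : A) + (1 : A) ⊗ₜ[ℂ] b 1)
    (hcounit : Coalgebra.counit (R := ℂ) (b 1) = 0)
    (hantipode : HopfAlgebra.antipode (R := ℂ) (b 1) = - b 1) :
    tildeSet ℂ A = {0} := by
  classical
  have hpow : ∀ n : ℕ, b n = b 1 ^ n := by
    intro n
    induction n with
    | zero => simpa using hone
    | succ n ih => rw [pow_succ, ← ih, hmul]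
  -- comultiplication of b n
  have hcomulN : ∀ n : ℕ, Coalgebra.comul (R := ℂ) (b n)
      = ∑ k ∈ Finset.range (n + 1), (n.choose k) • (b k ⊗ₜ[ℂ] b (n - k)) := by
    intro n
    rw [hpow n, Bialgebra.comul_pow, hcomul, add_pow]
    refine Finset.sum_congr rfl fun k hk => ?_
    rw [Algebra.TensorProduct.tmul_pow, Algebra.TensorProduct.tmul_pow,
      Algebra.TensorProduct.tmul_mul_tmul, one_pow, one_pow, one_mul, mul_one,
      ← hpow, ← hpow, nsmul_eq_mul, mul_comm]
  -- convolution evaluated on basis elements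
  have hconv : ∀ (u v : Module.Dual ℂ A) (n : ℕ),
      conv u v (b n) = ∑ k ∈ Finset.range (n + 1),
        (n.choose k : ℂ) * (u (b k) * v (b (n - k))) := by
    intro u v n
    show (LinearMap.mul' ℂ ℂ) ((TensorProduct.map u v) (Coalgebra.comul (R := ℂ) (b n))) = _
    rw [hcomulN, map_sum, map_sum]
    refine Finset.sum_congr rfl fun k hk => ?_
    rw [map_nsmul, map_nsmul, TensorProduct.map_tmul, LinearMap.mul'_apply, nsmul_eq_mul]
  -- counit on basis elements
  have hcounitN : ∀ n : ℕ, Coalgebra.counit (R := ℂ) (b n) = if n = 0 then 1 else 0 := by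
    intro n
    rw [hpow n, Bialgebra.counit_pow, hcounit, zero_pow_eq]
  -- conv w counit = w
  have hright : ∀ w : Module.Dual ℂ A, conv w (Coalgebra.counit (R := ℂ)) = w := by
    intro w
    apply b.ext
    intro n
    rw [hconv]
    rw [Finset.sum_eq_single_of_mem n (Finset.self_mem_range_succ n)]
    · simp [hcounitN]
    · intro k hk hkn
      have hk' : k < n := lt_of_le_of_ne (Nat.lt_succ_iff.mp (Finset.mem_range.mp hk)) hkn
      rw [hcounitN, if_neg (by omega), mul_zero, mul_zero]
  -- conv with 0
  have hconv0l : ∀ v : Module.Dual ℂ A, conv 0 v = 0 := by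
    intro v
    unfold conv
    rw [TensorProduct.map_zero_left, LinearMap.zero_comp, LinearMap.comp_zero]
  have hconv0r : ∀ u : Module.Dual ℂ A, conv u 0 = 0 := by
    intro u
    unfold conv
    rw [TensorProduct.map_zero_right, LinearMap.zero_comp, LinearMap.comp_zero]
  ext w
  simp only [tildeSet, Set.mem_setOf_eq, Set.mem_singleton_iff]
  constructor
  · intro hfin
    by_contra hw
    have hex : ∃ n, w (b n) ≠ 0 := by
      by_contra h
      push_neg at h
      exact hw (b.ext fun n => by simpa using h n)
    set m := Nat.find hex with hmdef
    have hm : w (b m) ≠ 0 := Nat.find_spec hex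
    have hmin : ∀ i, i < m → w (b i) = 0 := fun i hi => not_not.mp (Nat.find_min hex hi)
    -- the family conv (coord k) w
    set F : ℕ → Module.Dual ℂ A := fun k => conv (b.coord k) w with hFdef
    have hF : ∀ k n : ℕ, F k (b n)
        = if k ≤ n then (n.choose k : ℂ) * w (b (n - k)) else 0 := by
      intro k n
      rw [hFdef]
      simp only
      rw [hconv]
      by_cases hk : k ≤ n
      · rw [if_pos hk, Finset.sum_eq_single_of_mem k (Finset.mem_range.mpr (Nat.lt_succ_of_le hk))]
        · simp
        · intro j hj hjk
          simp [Module.Basis.coord_apply, Module.Basis.repr_self, Finsupp.single_apply, hjk]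
      · rw [if_neg hk]
        apply Finset.sum_eq_zero
        intro j hj
        have : j ≠ k := by
          have := Finset.mem_range.mp hj
          omega
        simp [Module.Basis.coord_apply, Module.Basis.repr_self, Finsupp.single_apply, this]
    have hmem : ∀ k, F k ∈ twoSidedOrbit w := by
      intro k
      apply Submodule.subset_span
      exact ⟨b.coord k, Coalgebra.counit (R := ℂ), by rw [hright]⟩
    set g : ℕ → twoSidedOrbit w := fun k => ⟨F k, hmem k⟩ with hgdef
    have hli : LinearIndependent ℂ F := by
      rw [linearIndependent_iff]
      intro l hl
      have key : ∀ j, l j = 0 := by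
        intro j
        induction j using Nat.strong_induction_on with
        | _ j ih =>
          have h0 : (Finsupp.linearCombination ℂ F l) (b (m + j)) = 0 := by rw [hl]; rfl
          rw [Finsupp.linearCombination_apply, Finsupp.sum, LinearMap.coe_sum,
            Finset.sum_apply] at h0
          simp only [LinearMap.smul_apply, smul_eq_mul] at h0
          by_cases hjs : j ∈ l.support
          · rw [Finset.sum_eq_single_of_mem j hjs] at h0
            · rw [hF, if_pos (Nat.le_add_left j m), Nat.add_sub_cancel] at h0
              have hch : ((m + j).choose j : ℂ) ≠ 0 := by
                exact_mod_cast (Nat.choose_pos (Nat.le_add_left j m)).ne'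
              exact (mul_eq_zero.mp h0).resolve_right (mul_ne_zero hch hm)
            · intro i hi hij
              rcases lt_or_gt_of_ne hij with hlt | hgt
              · rw [ih i hlt, zero_mul]
              · rw [hF]
                by_cases hile : i ≤ m + j
                · rw [if_pos hile, hmin (m + j - i) (by omega), mul_zero, mul_zero]
                · rw [if_neg hile, mul_zero]
          · exact Finsupp.notMem_support_iff.mp hjs
      ext j
      exact key j
    have hgi : LinearIndependent ℂ g := by
      apply LinearIndependent.of_comp (twoSidedOrbit w).subtype
      exact hli
    haveI : Module.Finite ℂ (twoSidedOrbit w) := hfin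
    exact Module.Finite.not_linearIndependent_of_infinite g hgi
  · rintro rfl
    have hbot : twoSidedOrbit (0 : Module.Dual ℂ A) = ⊥ := by
      rw [eq_bot_iff, twoSidedOrbit, Submodule.span_le]
      rintro x ⟨w1, w2, rfl⟩
      rw [hconv0l, hconv0r]
      exact Submodule.zero_mem ⊥
    rw [show (twoSidedOrbit (0 : Module.Dual ℂ A)) = ⊥ from hbot]
    infer_instance
end

section
/- Suppose $A$ admits a normalized invariant integral $w_G$. Then for every finite-dimensional $A$-comodule $(V, \rho)$ one has $w_G(\chi_V) = (\dim_K V^G) \cdot 1_K$. -/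
open TensorProduct

noncomputable section

variable {K : Type} [Field K] {A : Type} [CommRing A] [HopfAlgebra K A]

/-- The character of a finite-dimensional comodule, computed with respect to a basis `b`:
`χ_V = ∑ i a_{ii}` where `ρ (b j) = ∑ i b i ⊗ a_{ij}` (independent of the basis). -/
def charOf {V : Type} [AddCommGroup V] [Module K V] {ι : Type} [Fintype ι]
    (b : Module.Basis ι K V) (ρ : V →ₗ[K] V ⊗[K] A) : A :=
  ∑ i, (TensorProduct.lid K A) ((LinearMap.rTensor A (b.coord i)) (ρ (b i)))

/-- The invariants `V^G = {v ∈ V : ρ v = v ⊗ 1}` of a comodule. -/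
def invariants {V : Type} [AddCommGroup V] [Module K V] (ρ : V →ₗ[K] V ⊗[K] A) :
    Submodule K V :=
  LinearMap.ker (ρ - (TensorProduct.mk K V A).flip 1)

section Aux

variable {V : Type} [AddCommGroup V] [Module K V]

lemma coact_apply (ρ : V →ₗ[K] V ⊗[K] A) (w : Module.Dual K A) (v : V) :
    coact ρ w v = TensorProduct.rid K V (LinearMap.lTensor V w (ρ v)) := rfl

/-- Separation: functionals on the second tensor factor separate points of `V ⊗ A`. -/
lemma sep (x y : V ⊗[K] A)
    (h : ∀ w : Module.Dual K A,
      TensorProduct.rid K V (LinearMap.lTensor V w x) =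
      TensorProduct.rid K V (LinearMap.lTensor V w y)) : x = y := by
  classical
  set c := Module.Basis.ofVectorSpace K A with hc
  let e : V ⊗[K] A ≃ₗ[K] (Module.Basis.ofVectorSpaceIndex K A →₀ V) :=
    (TensorProduct.congr (LinearEquiv.refl K V) c.repr).trans
      (TensorProduct.finsuppScalarRight K K V _)
  have key : ∀ (z : V ⊗[K] A) (i : Module.Basis.ofVectorSpaceIndex K A),
      e z i = TensorProduct.rid K V (LinearMap.lTensor V (c.coord i) z) := by
    intro z i
    induction z using TensorProduct.induction_on with
    | zero => simp
    | tmul v a =>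
        simp [e, TensorProduct.congr_tmul,
          TensorProduct.finsuppScalarRight_apply_tmul_apply, Module.Basis.coord_apply]
    | add p q hp hq => simp [map_add, Finsupp.add_apply, hp, hq]
  apply e.injective
  ext i
  rw [key, key]
  exact h (c.coord i)

lemma coact_conv {ρ : V →ₗ[K] V ⊗[K] A} (hρ : IsComodule ρ) (w w' : Module.Dual K A) :
    coact ρ (conv w w') = (coact ρ w).comp (coact ρ w') := by
  ext v
  have stepA : ∀ y : V ⊗[K] K,
      ρ (TensorProduct.rid K V y) =
        TensorProduct.rid K (V ⊗[K] A) (LinearMap.rTensor K ρ y) := by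
    intro y
    induction y using TensorProduct.induction_on with
    | zero => simp
    | tmul v k => simp [TensorProduct.rid_tmul]
    | add p q hp hq => simp [map_add, hp, hq]
  have stepB : ∀ x : V ⊗[K] A,
      LinearMap.rTensor K ρ (LinearMap.lTensor V w' x) =
        LinearMap.lTensor (V ⊗[K] A) w' (LinearMap.rTensor A ρ x) := by
    intro x
    induction x using TensorProduct.induction_on with
    | zero => simp
    | tmul v a => simp
    | add p q hp hq => simp [map_add, hp, hq]
  have stepC : LinearMap.rTensor A ρ (ρ v) =
      (TensorProduct.assoc K V A A).symm
        (LinearMap.lTensor V (Coalgebra.comul (R := K)) (ρ v)) := by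
    have := congrArg (fun f => (TensorProduct.assoc K V A A).symm
      (f v)) hρ.1
    simpa [LinearEquiv.symm_apply_apply] using this
  have stepD : ∀ z : V ⊗[K] (A ⊗[K] A),
      TensorProduct.rid K V (LinearMap.lTensor V w
        (TensorProduct.rid K (V ⊗[K] A) (LinearMap.lTensor (V ⊗[K] A) w'
          ((TensorProduct.assoc K V A A).symm z)))) =
      TensorProduct.rid K V (LinearMap.lTensor V
        ((LinearMap.mul' K K).comp (TensorProduct.map w w')) z) := by
    intro z
    induction z using TensorProduct.induction_on with
    | zero => simp
    | tmul v t =>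
        induction t using TensorProduct.induction_on with
        | zero => simp
        | tmul a a' =>
            simp [TensorProduct.assoc_symm_tmul, TensorProduct.rid_tmul,
              LinearMap.mul'_apply, smul_smul, mul_comm]
        | add p q hp hq =>
            simp only [TensorProduct.tmul_add, map_add, hp, hq]
    | add p q hp hq => simp [map_add, hp, hq]
  calc coact ρ (conv w w') v
      = TensorProduct.rid K V (LinearMap.lTensor V
          ((LinearMap.mul' K K).comp (TensorProduct.map w w'))
          (LinearMap.lTensor V (Coalgebra.comul (R := K)) (ρ v))) := by
        rw [coact_apply, conv, ← LinearMap.lTensor_comp_apply, LinearMap.comp_assoc]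
    _ = (coact ρ w).comp (coact ρ w') v := by
        rw [← stepD, ← stepC, LinearMap.comp_apply, coact_apply, coact_apply,
          ← stepB, ← stepA]

lemma coact_smul (ρ : V →ₗ[K] V ⊗[K] A) (c : K) (w : Module.Dual K A) :
    coact ρ (c • w) = c • coact ρ w := by
  ext v
  simp [coact_apply, LinearMap.lTensor_smul]

lemma mem_invariants {ρ : V →ₗ[K] V ⊗[K] A} {v : V} :
    v ∈ invariants ρ ↔ ρ v = v ⊗ₜ[K] (1 : A) := by
  simp [invariants, LinearMap.mem_ker, sub_eq_zero, TensorProduct.mk_apply]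

lemma coact_isProj {ρ : V →ₗ[K] V ⊗[K] A} (hρ : IsComodule ρ)
    (wG : Module.Dual K A) (hwG : IsNormalizedIntegral wG) :
    LinearMap.IsProj (invariants ρ) (coact ρ wG) := by
  constructor
  · intro v
    rw [mem_invariants]
    apply sep
    intro w
    have h1 : TensorProduct.rid K V (LinearMap.lTensor V w (ρ (coact ρ wG v)))
        = coact ρ w (coact ρ wG v) := rfl
    have h2 : coact ρ w (coact ρ wG v) = w 1 • coact ρ wG v := by
      rw [← LinearMap.comp_apply, ← coact_conv hρ, (hwG.2 w).1, coact_smul]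
      rfl
    have h3 : TensorProduct.rid K V (LinearMap.lTensor V w
        (coact ρ wG v ⊗ₜ[K] (1 : A))) = w 1 • coact ρ wG v := by
      simp [TensorProduct.rid_tmul]
    rw [h1, h2, h3]
  · intro v hv
    rw [mem_invariants] at hv
    rw [coact_apply, hv]
    simp [TensorProduct.rid_tmul, hwG.1]

lemma coord_rid_lTensor (f : Module.Dual K V) (w : Module.Dual K A) (x : V ⊗[K] A) :
    f (TensorProduct.rid K V (LinearMap.lTensor V w x)) =
      w (TensorProduct.lid K A (LinearMap.rTensor A f x)) := by
  induction x using TensorProduct.induction_on with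
  | zero => simp
  | tmul v a => simp [TensorProduct.rid_tmul, TensorProduct.lid_tmul, mul_comm]
  | add p q hp hq => simp [map_add, hp, hq]

end Aux

/-- If `w_G` is a normalized invariant integral on `G = Spec A`, then for every
finite-dimensional `A`-comodule `(V, ρ)` one has `w_G(χ_V) = dim_K V^G`. -/
theorem integral_of_character_eq_dim_invariants (wG : Module.Dual K A)
    (hwG : IsNormalizedIntegral wG) :
    ∀ (V : Type) [AddCommGroup V] [Module K V] [FiniteDimensional K V]
      (ρ : V →ₗ[K] V ⊗[K] A), IsComodule ρ →
        ∀ (ι : Type) [Fintype ι] (b : Module.Basis ι K V),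
          wG (charOf b ρ) = (Module.finrank K (invariants ρ) : K) := by
  intro V _ _ _ ρ hρ ι _ b
  classical
  have hproj := coact_isProj hρ wG hwG
  have htr : LinearMap.trace K V (coact ρ wG) = (Module.finrank K (invariants ρ) : K) :=
    hproj.trace
  rw [← htr, LinearMap.trace_eq_matrix_trace K b, Matrix.trace]
  rw [charOf, map_sum]
  apply Finset.sum_congr rfl
  intro i _
  rw [Matrix.diag_apply, LinearMap.toMatrix_apply]
  have : b.repr (coact ρ wG (b i)) i = b.coord i (coact ρ wG (b i)) := rfl
  rw [this, coact_apply, coord_rid_lTensor]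

end
end

section
/- Suppose $\tilde A$ is dense in $A^*$. Then every $\tilde w \in \tilde A$ lies in the linear span of $\{ \tilde w' * \tilde w : \tilde w' \in \tilde A \}$ and in the linear span of $\{ \tilde w * \tilde w' : \tilde w' \in \tilde A \}$. -/
open TensorProduct

noncomputable section

variable {K : Type} [Field K] {A : Type} [CommRing A] [HopfAlgebra K A]

lemma conv_apply_left (v u : Module.Dual K A) (a : A) :
    conv v u a = v ((TensorProduct.rid K A) ((LinearMap.lTensor A u) (Coalgebra.comul a))) := by
  have h : (LinearMap.mul' K K) ∘ₗ (TensorProduct.map v u)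
      = v ∘ₗ ((TensorProduct.rid K A).toLinearMap ∘ₗ LinearMap.lTensor A u) := by
    apply TensorProduct.ext'
    intro x y
    simp [mul_comm]
  show ((LinearMap.mul' K K) ∘ₗ (TensorProduct.map v u)) (Coalgebra.comul a) = _
  rw [h]; rfl

lemma conv_apply_right (u v : Module.Dual K A) (a : A) :
    conv u v a = v ((TensorProduct.lid K A) ((LinearMap.rTensor A u) (Coalgebra.comul a))) := by
  have h : (LinearMap.mul' K K) ∘ₗ (TensorProduct.map u v)
      = v ∘ₗ ((TensorProduct.lid K A).toLinearMap ∘ₗ LinearMap.rTensor A u) := by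
    apply TensorProduct.ext'
    intro x y
    simp
  show ((LinearMap.mul' K K) ∘ₗ (TensorProduct.map u v)) (Coalgebra.comul a) = _
  rw [h]; rfl

lemma conv_counit_left (u : Module.Dual K A) : conv Coalgebra.counit u = u := by
  ext a
  have h : (LinearMap.mul' K K) ∘ₗ (TensorProduct.map (Coalgebra.counit (R := K) (A := A)) u)
      = u ∘ₗ ((TensorProduct.lid K A).toLinearMap ∘ₗ LinearMap.rTensor A Coalgebra.counit) := by
    apply TensorProduct.ext'
    intro x y
    simp
  have : conv (Coalgebra.counit (R := K)) u a
      = ((LinearMap.mul' K K) ∘ₗ (TensorProduct.map (Coalgebra.counit (R := K) (A := A)) u))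
        (Coalgebra.comul a) := rfl
  rw [this, h]
  simp [Coalgebra.rTensor_counit_comul]

lemma conv_counit_right (u : Module.Dual K A) : conv u Coalgebra.counit = u := by
  ext a
  have h : (LinearMap.mul' K K) ∘ₗ (TensorProduct.map u (Coalgebra.counit (R := K) (A := A)))
      = u ∘ₗ ((TensorProduct.rid K A).toLinearMap ∘ₗ LinearMap.lTensor A Coalgebra.counit) := by
    apply TensorProduct.ext'
    intro x y
    simp [mul_comm]
  have : conv u (Coalgebra.counit (R := K)) a
      = ((LinearMap.mul' K K) ∘ₗ (TensorProduct.map u (Coalgebra.counit (R := K) (A := A))))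
        (Coalgebra.comul a) := rfl
  rw [this, h]
  simp [Coalgebra.lTensor_counit_comul]

lemma mem_of_forall_eval {M : Submodule K (Module.Dual K A)} [FiniteDimensional K M]
    {u : Module.Dual K A} (h : ∀ a : A, (∀ g ∈ M, g a = 0) → u a = 0) : u ∈ M := by
  haveI : Module.Free K M := Module.Free.of_divisionRing K M
  let b := Module.finBasis K M
  let L : Fin (Module.finrank K M) → Module.Dual K A := fun i => (b i : Module.Dual K A)
  have hspan : Submodule.span K (Set.range L) = M := by
    have h2 : Submodule.map M.subtype (Submodule.span K (Set.range b)) = M := by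
      rw [b.span_eq, Submodule.map_top, Submodule.range_subtype]
    rw [Submodule.map_span] at h2
    have h3 : Set.range L = M.subtype '' Set.range b := by
      rw [← Set.range_comp]; rfl
    rw [h3]; exact h2
  have hker : ⨅ i, LinearMap.ker (L i) ≤ LinearMap.ker u := by
    intro a ha
    simp only [Submodule.mem_iInf, LinearMap.mem_ker] at ha
    rw [LinearMap.mem_ker]
    apply h
    have key : ∀ g ∈ Submodule.span K (Set.range L), g a = 0 := by
      intro g hg
      induction hg using Submodule.span_induction with
      | mem x hx => obtain ⟨i, rfl⟩ := hx; exact ha i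
      | zero => simp
      | add x y _ _ hx hy => simp [hx, hy]
      | smul c x _ hx => simp [hx]
    intro g hg
    exact key g (hspan.symm ▸ hg)
  have := mem_span_of_iInf_ker_le_ker hker
  rwa [hspan] at this

/-- If `Ã` is dense in `A*`, then every `w̃ ∈ Ã` lies in the linear span of
`{w̃' * w̃ : w̃' ∈ Ã}` and in the linear span of `{w̃ * w̃' : w̃' ∈ Ã}`. -/
theorem mem_span_tilde_conv_of_dense (hdense : TildeDense K A) :
    ∀ u ∈ tildeSet K A,
      u ∈ Submodule.span K {x : Module.Dual K A | ∃ v ∈ tildeSet K A, x = conv v u} ∧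
      u ∈ Submodule.span K {x : Module.Dual K A | ∃ v ∈ tildeSet K A, x = conv u v} := by
  intro u hu
  haveI : FiniteDimensional K (twoSidedOrbit u) := hu
  constructor
  · -- left: u ∈ span {conv v u : v ∈ Ã}
    set M := Submodule.span K {x : Module.Dual K A | ∃ v ∈ tildeSet K A, x = conv v u} with hMdef
    have hM : M ≤ twoSidedOrbit u := by
      apply Submodule.span_le.2
      rintro x ⟨v, hv, rfl⟩
      exact Submodule.subset_span ⟨v, Coalgebra.counit, by rw [conv_counit_right]⟩
    haveI : FiniteDimensional K M := Submodule.finiteDimensional_of_le hM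
    apply mem_of_forall_eval
    intro a ha
    have hb0 : (TensorProduct.rid K A) ((LinearMap.lTensor A u) (Coalgebra.comul a)) = 0 := by
      apply hdense
      intro w hw
      have hwm : conv w u ∈ M := Submodule.subset_span ⟨w, hw, rfl⟩
      have := ha _ hwm
      rwa [conv_apply_left] at this
    have h1 : u a = conv (Coalgebra.counit (R := K)) u a := by rw [conv_counit_left]
    rw [h1, conv_apply_left, hb0, map_zero]
  · -- right: u ∈ span {conv u v : v ∈ Ã}
    set M := Submodule.span K {x : Module.Dual K A | ∃ v ∈ tildeSet K A, x = conv u v} with hMdef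
    have hM : M ≤ twoSidedOrbit u := by
      apply Submodule.span_le.2
      rintro x ⟨v, hv, rfl⟩
      exact Submodule.subset_span ⟨Coalgebra.counit, v, by rw [conv_counit_left]⟩
    haveI : FiniteDimensional K M := Submodule.finiteDimensional_of_le hM
    apply mem_of_forall_eval
    intro a ha
    have hb0 : (TensorProduct.lid K A) ((LinearMap.rTensor A u) (Coalgebra.comul a)) = 0 := by
      apply hdense
      intro w hw
      have hwm : conv u w ∈ M := Submodule.subset_span ⟨w, hw, rfl⟩
      have := ha _ hwm
      rwa [conv_apply_right] at this
    have h1 : u a = conv u (Coalgebra.counit (R := K)) a := by rw [conv_counit_right]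
    rw [h1, conv_apply_right, hb0, map_zero]


end
end
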